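/- For the Lennard-Jones potential, the function h(r) := φ''(r) + 4 φ''(2r) (which equals a₀ W''(r/a₀) for the energy density W(D) := (φ(D a₀) + φ(2 D a₀))/a₀) changes sign exactly once: h(r) > 0 for 0 < r < (53261/29120)^{1/6}, h((53261/29120)^{1/6}) = 0, and h(r) < 0 for r > (53261/29120)^{1/6}; moreover (53261/29120)^{1/6} > 1, so this sign change occurs at a deformation gradient D̃ > 1 whenever a₀ ≤ 1. -/

import Mathlib

/-- The Lennard-Jones potential `φ(r) = r⁻¹² − 2 r⁻⁶`. -/
noncomputable def LJ : ℝ → ℝ := fun r => r ^ (-12 : ℤ) - 2 * r ^ (-6 : ℤ)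

/-- The point where `h(r) := φ''(r) + 4 φ''(2r)` changes sign. -/
noncomputable def ljInflection : ℝ := ((53261 : ℝ) / 29120) ^ ((1 : ℝ) / 6)

lemma LJ_deriv1 (x : ℝ) (hx : x ≠ 0) :
    deriv LJ x = -12 * x ^ (-13 : ℤ) + 12 * x ^ (-7 : ℤ) := by
  have h1 : DifferentiableAt ℝ (fun r : ℝ => r ^ (-12 : ℤ)) x :=
    differentiableAt_zpow.mpr (Or.inl hx)
  have h2 : DifferentiableAt ℝ (fun r : ℝ => r ^ (-6 : ℤ)) x :=
    differentiableAt_zpow.mpr (Or.inl hx)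
  have : deriv LJ x = deriv (fun r : ℝ => r ^ (-12 : ℤ)) x -
      deriv (fun r : ℝ => 2 * r ^ (-6 : ℤ)) x := by
    unfold LJ
    exact deriv_sub h1 (h2.const_mul 2)
  rw [this, deriv_const_mul 2 h2, deriv_zpow, deriv_zpow]
  norm_num
  ring

lemma LJ_deriv2 (x : ℝ) (hx : x ≠ 0) :
    deriv (deriv LJ) x = 156 * x ^ (-14 : ℤ) - 84 * x ^ (-8 : ℤ) := by
  have hev : deriv LJ =ᶠ[nhds x]
      (fun y => -12 * y ^ (-13 : ℤ) + 12 * y ^ (-7 : ℤ)) := by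
    filter_upwards [eventually_ne_nhds hx] with y hy using LJ_deriv1 y hy
  rw [hev.deriv_eq]
  have h1 : DifferentiableAt ℝ (fun r : ℝ => r ^ (-13 : ℤ)) x :=
    differentiableAt_zpow.mpr (Or.inl hx)
  have h2 : DifferentiableAt ℝ (fun r : ℝ => r ^ (-7 : ℤ)) x :=
    differentiableAt_zpow.mpr (Or.inl hx)
  rw [deriv_fun_add ((h1.const_mul _)) ((h2.const_mul _)),
    deriv_const_mul _ h1, deriv_const_mul _ h2, deriv_zpow, deriv_zpow]
  norm_num
  ring

lemma LJ_h (r : ℝ) (hr : 0 < r) :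
    deriv (deriv LJ) r + 4 * deriv (deriv LJ) (2 * r)
      = (1365 / 16) * (r ^ 14)⁻¹ * (53261 / 29120 - r ^ 6) := by
  have hr' : r ≠ 0 := ne_of_gt hr
  have h2r : (2 : ℝ) * r ≠ 0 := by positivity
  rw [LJ_deriv2 r hr', LJ_deriv2 _ h2r]
  have e : ∀ (x : ℝ), x ≠ 0 → ∀ n : ℕ, x ^ (-(n : ℤ)) = (x ^ n)⁻¹ := by
    intro x hx n
    rw [zpow_neg, zpow_natCast]
  rw [show ((-14 : ℤ)) = -(14 : ℕ) by norm_num, show ((-8 : ℤ)) = -(8 : ℕ) by norm_num,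
    e r hr' 14, e r hr' 8, e _ h2r 14, e _ h2r 8]
  field_simp
  ring

lemma ljInflection_pos : 0 < ljInflection :=
  Real.rpow_pos_of_pos (by norm_num) _

lemma ljInflection_pow : ljInflection ^ (6 : ℕ) = 53261 / 29120 := by
  rw [ljInflection, ← Real.rpow_natCast (((53261 : ℝ) / 29120) ^ ((1:ℝ)/6)) 6,
    ← Real.rpow_mul (by norm_num)]
  norm_num

/-- For the Lennard-Jones potential, `h(r) := φ''(r) + 4 φ''(2r)` (which equals
`a₀ W''(r/a₀)`) changes sign exactly once, at `(53261/29120)^{1/6} > 1`; hence the sign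
change occurs at a deformation gradient `D̃ > 1` whenever `a₀ ≤ 1`. -/
theorem stmt_10 :
    (∀ r : ℝ, 0 < r → r < ljInflection →
      0 < deriv (deriv LJ) r + 4 * deriv (deriv LJ) (2 * r)) ∧
    deriv (deriv LJ) ljInflection + 4 * deriv (deriv LJ) (2 * ljInflection) = 0 ∧
    (∀ r : ℝ, ljInflection < r →
      deriv (deriv LJ) r + 4 * deriv (deriv LJ) (2 * r) < 0) ∧
    1 < ljInflection ∧
    (∀ a₀ : ℝ, 0 < a₀ → a₀ ≤ 1 → 1 < ljInflection / a₀) := by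
  have hL : 0 < ljInflection := ljInflection_pos
  have hL6 := ljInflection_pow
  have hL1 : 1 < ljInflection := by
    rw [ljInflection]
    rw [Real.one_lt_rpow_iff_of_pos (by norm_num)]
    left
    constructor <;> norm_num
  refine ⟨?_, ?_, ?_, hL1, ?_⟩
  · intro r hr hrL
    rw [LJ_h r hr]
    have h6 : r ^ 6 < 53261 / 29120 := by
      rw [← hL6]; exact pow_lt_pow_left₀ hrL hr.le (by norm_num)
    have : (0:ℝ) < 53261 / 29120 - r ^ 6 := by linarith
    positivity
  · rw [LJ_h _ hL, hL6]
    ring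
  · intro r hrL
    have hr : 0 < r := lt_trans hL hrL
    rw [LJ_h r hr]
    have h6 : 53261 / 29120 < r ^ 6 := by
      rw [← hL6]; exact pow_lt_pow_left₀ hrL hL.le (by norm_num)
    have h1 : (0:ℝ) < (1365 / 16) * (r ^ 14)⁻¹ := by positivity
    nlinarith
  · intro a₀ ha₀ ha₁
    rw [one_lt_div ha₀]
    exact lt_of_le_of_lt ha₁ hL1
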